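/- Let f : ℕ → ℕ and define β_h := e·f(h)/h − 1, and suppose β_h → 0 as h → ∞. If log h − 2·h·β_h → ∞ as h → ∞, then θ_1(f(h), h) → 0 as h → ∞. -/

import Mathlib

open MeasureTheory Filter
open scoped ENNReal

/-- A vertex of the complete `n`-ary tree of height `h`: at depth `i ≤ h`,
a vertex is a word of length `i` over an alphabet of size `n`. -/
abbrev TreeVertex (n h : ℕ) : Type := (i : Fin (h + 1)) × (Fin i.val → Fin n)

/-- The vertex at depth `i` on the root-to-leaf path determined by `leaf`:
the length-`i` prefix of `leaf`. -/
def pathVertex {n h : ℕ} (leaf : Fin h → Fin n) (i : Fin (h + 1)) : TreeVertex n h :=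
  ⟨i, fun j => leaf ⟨j.val, lt_of_lt_of_le j.isLt (Nat.lt_succ_iff.mp i.isLt)⟩⟩

/-- The event (set of labelings `ω` of the vertices) that some root-to-leaf path of
the complete `n`-ary tree of height `h` is `k`-accessible: there is a leaf and
indices `0 = r 0 < r 1 < ⋯ < r t = h` with consecutive gaps at most `k` along which
the labels are strictly increasing. -/
def kAccessibleEvent (k n h : ℕ) : Set (TreeVertex n h → ℝ) :=
  {ω | ∃ leaf : Fin h → Fin n, ∃ t : ℕ, ∃ r : Fin (t + 1) → Fin (h + 1),
    StrictMono r ∧ r 0 = 0 ∧ r (Fin.last t) = Fin.last h ∧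
    (∀ i : Fin t, (r i.succ).val ≤ (r i.castSucc).val + k) ∧
    StrictMono fun i => ω (pathVertex leaf (r i))}

/-- The vertices are labelled by i.i.d. Uniform[0,1] random variables: the product
over all vertices of Lebesgue measure restricted to `[0,1]`. -/
noncomputable def treeLabelMeasure (n h : ℕ) : Measure (TreeVertex n h → ℝ) :=
  Measure.pi fun _ => (volume : Measure ℝ).restrict (Set.Icc 0 1)

/-- `theta k n h` is the probability that the labelled complete `n`-ary tree of
height `h` contains a `k`-accessible root-to-leaf path. -/
noncomputable def theta (k n h : ℕ) : ℝ :=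
  (treeLabelMeasure n h (kAccessibleEvent k n h)).toReal

instance (n h : ℕ) : IsProbabilityMeasure (treeLabelMeasure n h) := by
  unfold treeLabelMeasure
  have : IsProbabilityMeasure ((volume : Measure ℝ).restrict (Set.Icc (0:ℝ) 1)) := by
    constructor
    simp [Real.volume_Icc]
  infer_instance

lemma pathVertex_injective {n h : ℕ} (leaf : Fin h → Fin n) :
    Function.Injective (pathVertex leaf) := fun i j hij => congrArg Sigma.fst hij

set_option maxHeartbeats 1000000 in
lemma measure_strictMono_le {n h : ℕ} (q : Fin (h + 1) → TreeVertex n h)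
    (hq : Function.Injective q) :
    treeLabelMeasure n h {ω | StrictMono fun i => ω (q i)} ≤ (((h+1).factorial : ℝ≥0∞))⁻¹ := by
  classical
  set μ := treeLabelMeasure n h with hμ
  set S : Equiv.Perm (Fin (h + 1)) → Set (TreeVertex n h → ℝ) :=
    fun σ => {ω | StrictMono fun i => ω (q (σ i))} with hS
  have meas : ∀ σ, MeasurableSet (S σ) := by
    intro σ
    have : S σ = ⋂ k : Fin h, {ω : TreeVertex n h → ℝ |
        ω (q (σ k.castSucc)) < ω (q (σ k.succ))} := by
      ext ω
      simp [hS, Fin.strictMono_iff_lt_succ, Set.mem_iInter]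
    rw [this]
    exact MeasurableSet.iInter fun k =>
      measurableSet_lt (measurable_pi_apply _) (measurable_pi_apply _)
  have eqmeas : ∀ σ, μ (S σ) = μ (S 1) := by
    intro σ
    set F : Fin (h + 1) ≃ Set.range q := Equiv.ofInjective q hq with hF
    set E : Equiv.Perm (TreeVertex n h) := σ.extendDomain F with hE
    have hEq : ∀ i, E (q i) = q (σ i) := by
      intro i
      have h1 : (F i : TreeVertex n h) = q i := rfl
      have := Equiv.Perm.extendDomain_apply_image σ F i
      rw [h1] at this
      rw [this]; rfl
    have mp : MeasurePreserving
        (MeasurableEquiv.piCongrLeft (fun _ : TreeVertex n h => ℝ) E) μ μ :=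
      measurePreserving_piCongrLeft
        (fun _ : TreeVertex n h => (volume : Measure ℝ).restrict (Set.Icc 0 1)) E
    have hpre : (MeasurableEquiv.piCongrLeft (fun _ : TreeVertex n h => ℝ) E) ⁻¹' (S σ)
        = S 1 := by
      ext ω
      have key : ∀ i, (MeasurableEquiv.piCongrLeft (fun _ : TreeVertex n h => ℝ) E) ω
          (q (σ i)) = ω (q i) := by
        intro i
        rw [← hEq i]
        exact MeasurableEquiv.piCongrLeft_apply_apply E (β := fun _ : TreeVertex n h => ℝ) ω (q i)
      simp only [Set.mem_preimage, hS, Set.mem_setOf_eq]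
      rw [show (fun i => (MeasurableEquiv.piCongrLeft (fun _ : TreeVertex n h => ℝ) E) ω
          (q (σ i))) = fun i => ω (q i) from funext key]
      simp
    calc μ (S σ)
        = μ ((MeasurableEquiv.piCongrLeft (fun _ : TreeVertex n h => ℝ) E) ⁻¹' (S σ)) :=
          (mp.measure_preimage (meas σ).nullMeasurableSet).symm
      _ = μ (S 1) := by rw [hpre]
  have hdisj : Pairwise (Function.onFun Disjoint S) := by
    intro σ τ hne
    rw [Function.onFun, Set.disjoint_left]
    intro ω hσ hτ
    simp only [hS, Set.mem_setOf_eq] at hσ hτ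
    have hrange : Set.range (fun i => ω (q (σ i))) = Set.range (fun i => ω (q (τ i))) := by
      have r1 : Set.range (fun i => ω (q (σ i))) = Set.range (fun i => ω (q i)) :=
        Function.Surjective.range_comp σ.surjective (fun i => ω (q i))
      have r2 : Set.range (fun i => ω (q (τ i))) = Set.range (fun i => ω (q i)) :=
        Function.Surjective.range_comp τ.surjective (fun i => ω (q i))
      rw [r1, r2]
    have heqf : (fun i => ω (q (σ i))) = fun i => ω (q (τ i)) := by
      have inst : WellFoundedLT (Fin (h + 1)) := inferInstance
      exact (StrictMono.range_inj (f := fun i => ω (q (σ i))) (g := fun i => ω (q (τ i))) hσ hτ).1 hrange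
    have ginj : Function.Injective fun i : Fin (h + 1) => ω (q i) := by
      intro a b hab
      have h2 : (fun i => ω (q (σ i))) (σ.symm a) = (fun i => ω (q (σ i))) (σ.symm b) := by
        simpa [Equiv.apply_symm_apply] using hab
      have h3 := hσ.injective h2
      simpa using congrArg σ h3
    exact hne (Equiv.ext fun i => ginj (congrFun heqf i))
  have hcard : Fintype.card (Equiv.Perm (Fin (h + 1))) = (h + 1).factorial := by
    simp [Fintype.card_perm]
  have hsum : ((h + 1).factorial : ℝ≥0∞) * μ (S 1) ≤ 1 := by
    have h1 : μ (⋃ σ, S σ) = ∑' σ, μ (S σ) := measure_iUnion hdisj meas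
    have h2 : ∑' σ : Equiv.Perm (Fin (h + 1)), μ (S σ)
        = ((h + 1).factorial : ℝ≥0∞) * μ (S 1) := by
      rw [tsum_fintype]
      simp_rw [eqmeas]
      rw [Finset.sum_const, Finset.card_univ, hcard, nsmul_eq_mul]
    calc ((h + 1).factorial : ℝ≥0∞) * μ (S 1) = μ (⋃ σ, S σ) := by rw [h1, h2]
      _ ≤ 1 := prob_le_one
  have hfin : μ (S 1) ≤ ((h + 1).factorial : ℝ≥0∞)⁻¹ :=
    ENNReal.le_inv_iff_mul_le.2 (by rwa [mul_comm])
  have hS1 : S 1 = {ω : TreeVertex n h → ℝ | StrictMono fun i => ω (q i)} := by simp [hS]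
  rwa [hS1] at hfin

lemma kAccessible_subset (n h : ℕ) :
    kAccessibleEvent 1 n h ⊆
      ⋃ leaf : Fin h → Fin n,
        {ω : TreeVertex n h → ℝ | StrictMono fun i => ω (pathVertex leaf i)} := by
  intro ω hω
  obtain ⟨leaf, t, r, hmono, h0, hlast, hgap, hsm⟩ := hω
  have hval : ∀ iv : ℕ, ∀ hiv : iv < t + 1, (r ⟨iv, hiv⟩).val = iv := by
    intro iv
    induction iv with
    | zero =>
      intro hiv
      have e0 : (⟨0, hiv⟩ : Fin (t + 1)) = 0 := rfl
      rw [e0, h0]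
      rfl
    | succ iv ih =>
      intro hiv
      have hivt : iv < t := Nat.lt_of_succ_lt_succ hiv
      set k : Fin t := ⟨iv, hivt⟩ with hk
      have hgapk := hgap k
      have hltk : (r k.castSucc).val < (r k.succ).val :=
        hmono (Fin.castSucc_lt_succ (i := k))
      have ihv : (r k.castSucc).val = iv := ih (Nat.lt_succ_of_lt hivt)
      have hsu : (⟨iv + 1, hiv⟩ : Fin (t + 1)) = k.succ := rfl
      rw [hsu]
      omega
  have ht : t = h := by
    have h1 := hval t t.lt_succ_self
    have h2 : (⟨t, t.lt_succ_self⟩ : Fin (t + 1)) = Fin.last t := rfl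
    rw [h2, hlast] at h1
    simpa using h1.symm
  subst ht
  have hr : ∀ i, r i = i := fun i => Fin.ext (hval i.val i.isLt)
  refine Set.mem_iUnion.2 ⟨leaf, ?_⟩
  have heq : (fun i => ω (pathVertex leaf (r i))) = fun i => ω (pathVertex leaf i) :=
    funext fun i => by rw [hr]
  rw [Set.mem_setOf_eq, ← heq]
  exact hsm

lemma theta_one_le (n h : ℕ) :
    theta 1 n h ≤ (n : ℝ) ^ h / ((h + 1).factorial : ℝ) := by
  have hb : treeLabelMeasure n h (kAccessibleEvent 1 n h)
      ≤ (n : ℝ≥0∞) ^ h * (((h + 1).factorial : ℝ≥0∞))⁻¹ := by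
    calc treeLabelMeasure n h (kAccessibleEvent 1 n h)
        ≤ treeLabelMeasure n h (⋃ leaf : Fin h → Fin n,
            {ω : TreeVertex n h → ℝ | StrictMono fun i => ω (pathVertex leaf i)}) :=
          measure_mono (kAccessible_subset n h)
      _ ≤ ∑' leaf : Fin h → Fin n,
            treeLabelMeasure n h {ω | StrictMono fun i => ω (pathVertex leaf i)} :=
          measure_iUnion_le _
      _ ≤ ∑' _leaf : Fin h → Fin n, (((h + 1).factorial : ℝ≥0∞))⁻¹ :=
          ENNReal.tsum_le_tsum fun leaf =>
            measure_strictMono_le _ (pathVertex_injective leaf)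
      _ = (n : ℝ≥0∞) ^ h * (((h + 1).factorial : ℝ≥0∞))⁻¹ := by
          rw [tsum_fintype, Finset.sum_const, Finset.card_univ, nsmul_eq_mul]
          congr 1
          simp [Fintype.card_fun]
  have hne : (n : ℝ≥0∞) ^ h * (((h + 1).factorial : ℝ≥0∞))⁻¹ ≠ ⊤ := by
    apply ENNReal.mul_ne_top
    · exact ENNReal.pow_ne_top (ENNReal.natCast_ne_top n)
    · exact ENNReal.inv_ne_top.2 (by exact_mod_cast (Nat.factorial_pos (h + 1)).ne')
  have hmono := ENNReal.toReal_mono hne hb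
  refine le_trans hmono ?_
  rw [ENNReal.toReal_mul, ENNReal.toReal_pow, ENNReal.toReal_inv]
  simp [div_eq_mul_inv]

lemma bound_le_exp (f : ℕ → ℕ) (β : ℕ → ℝ)
    (hβ : ∀ h : ℕ, β h = Real.exp 1 * (f h : ℝ) / (h : ℝ) - 1)
    {h : ℕ} (hh : 1 ≤ h) :
    (f h : ℝ) ^ h / ((h + 1).factorial : ℝ) ≤ Real.exp ((h : ℝ) * β h - Real.log h) := by
  have H0 : (0 : ℝ) < (h : ℝ) := by exact_mod_cast hh
  have hH : (h : ℝ) ≠ 0 := H0.ne'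
  have hb : (0 : ℝ) ≤ 1 + β h := by
    rw [hβ h]
    have e1 : 1 + (Real.exp 1 * (f h : ℝ) / (h : ℝ) - 1)
        = Real.exp 1 * (f h : ℝ) / (h : ℝ) := by ring
    rw [e1]
    positivity
  have hFe : (f h : ℝ) = ((h : ℝ) / Real.exp 1) * (1 + β h) := by
    rw [hβ h]
    field_simp
    ring
  have hfact_pos : (0 : ℝ) < (h.factorial : ℝ) := by exact_mod_cast h.factorial_pos
  have hHe : ((h : ℝ) / Real.exp 1) ^ h ≤ (h.factorial : ℝ) := by
    rw [div_pow, div_le_iff₀ (by positivity)]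
    have hsum := Real.sum_le_exp_of_nonneg (le_of_lt H0) (h + 1)
    have hterm : (h : ℝ) ^ h / (h.factorial : ℝ) ≤ Real.exp h := by
      refine le_trans ?_ hsum
      have := Finset.single_le_sum (f := fun i => (h : ℝ) ^ i / (i.factorial : ℝ))
        (fun i _ => by positivity) (Finset.self_mem_range_succ h)
      simpa using this
    rw [div_le_iff₀ hfact_pos] at hterm
    calc (h : ℝ) ^ h ≤ Real.exp h * (h.factorial : ℝ) := hterm
      _ = (h.factorial : ℝ) * Real.exp 1 ^ h := by rw [Real.exp_one_pow]; ring
  have step1 : (f h : ℝ) ^ h ≤ (h.factorial : ℝ) * (1 + β h) ^ h := by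
    rw [hFe, mul_pow]
    exact mul_le_mul_of_nonneg_right hHe (pow_nonneg hb h)
  have step2 : (f h : ℝ) ^ h / ((h + 1).factorial : ℝ) ≤ (1 + β h) ^ h / ((h : ℝ) + 1) := by
    rw [Nat.factorial_succ]
    push_cast
    rw [div_le_div_iff₀ (by positivity) (by positivity)]
    calc (f h : ℝ) ^ h * ((h : ℝ) + 1)
        ≤ ((h.factorial : ℝ) * (1 + β h) ^ h) * ((h : ℝ) + 1) :=
          mul_le_mul_of_nonneg_right step1 (by positivity)
      _ = (1 + β h) ^ h * (((h : ℝ) + 1) * (h.factorial : ℝ)) := by ring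
  have step3 : (1 + β h) ^ h ≤ Real.exp ((h : ℝ) * β h) := by
    calc (1 + β h) ^ h ≤ Real.exp (β h) ^ h :=
          pow_le_pow_left₀ hb (by linarith [Real.add_one_le_exp (β h)]) h
      _ = Real.exp ((h : ℝ) * β h) := (Real.exp_nat_mul (β h) h).symm
  calc (f h : ℝ) ^ h / ((h + 1).factorial : ℝ) ≤ (1 + β h) ^ h / ((h : ℝ) + 1) := step2
    _ ≤ Real.exp ((h : ℝ) * β h) / ((h : ℝ) + 1) := by gcongr
    _ ≤ Real.exp ((h : ℝ) * β h) / (h : ℝ) := by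
        gcongr <;> linarith [Real.exp_nonneg ((h : ℝ) * β h)]
    _ = Real.exp ((h : ℝ) * β h - Real.log h) := by
        rw [Real.exp_sub, Real.exp_log H0]

theorem theta_one_tendsto_zero_of_beta
    (f : ℕ → ℕ) (β : ℕ → ℝ)
    (hβ : ∀ h : ℕ, β h = Real.exp 1 * (f h : ℝ) / (h : ℝ) - 1)
    (hβ0 : Tendsto β atTop (nhds 0))
    (h1 : Tendsto (fun h : ℕ => Real.log h - 2 * (h : ℝ) * β h) atTop atTop) :
    Tendsto (fun h : ℕ => theta 1 (f h) h) atTop (nhds 0) := by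
  have hupper : Tendsto (fun h : ℕ => Real.exp ((h : ℝ) * β h - Real.log h)) atTop (nhds 0) := by
    have hlog : Tendsto (fun h : ℕ => Real.log h) atTop atTop :=
      Real.tendsto_log_atTop.comp tendsto_natCast_atTop_atTop
    have hsum : Tendsto (fun h : ℕ => (Real.log h - 2 * (h : ℝ) * β h) + Real.log h)
        atTop atTop := Filter.Tendsto.atTop_add_atTop h1 hlog
    have hdiv : Tendsto (fun h : ℕ => ((Real.log h - 2 * (h : ℝ) * β h) + Real.log h) / 2)
        atTop atTop := hsum.atTop_div_const two_pos
    have harg : Tendsto (fun h : ℕ => (h : ℝ) * β h - Real.log h) atTop atBot := by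
      have hneg : Tendsto
          (fun h : ℕ => -(((Real.log h - 2 * (h : ℝ) * β h) + Real.log h) / 2)) atTop atBot :=
        tendsto_neg_atBot_iff.2 hdiv
      refine hneg.congr fun x => by ring
    exact Real.tendsto_exp_atBot.comp harg
  have hg0 : Tendsto (fun h : ℕ => (f h : ℝ) ^ h / (((h + 1).factorial : ℝ))) atTop (nhds 0) := by
    refine squeeze_zero' (Filter.Eventually.of_forall fun h => by positivity) ?_ hupper
    filter_upwards [eventually_ge_atTop 1] with h hh
    exact bound_le_exp f β hβ hh
  exact squeeze_zero (fun h => ENNReal.toReal_nonneg) (fun h => theta_one_le (f h) h) hg0
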